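/- Let f : ℝ² → ℝ² be a continuously differentiable (hence locally Lipschitz) vector field with flow φ_f, let g : ℝ² → ℝ be continuously differentiable, and let G = {x ∈ ℝ² | g(x) = 0}. Let A ⊆ ℝ² be an open set with A ∩ G = ∅. If for all x ∈ A the return time τ_{f,G}(x) is finite, so that z = P_{f,G}(x) is defined, and ∇g(z)·f(z) ≠ 0, then the Poincaré map P_{f,G} restricted to A is continuous. -/

import Mathlib

open scoped RealInnerProductSpace
open Filter Topology

noncomputable section

/-- The planar state space ℝ². -/
abbrev State := EuclideanSpace ℝ (Fin 2)

/-- `φ` is the flow of the vector field `f` : `φ x 0 = x` and `∂φ(x,t)/∂t = f (φ x t)`. -/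
def IsFlow (f : State → State) (φ : State → ℝ → State) : Prop :=
  (∀ x, φ x 0 = x) ∧ ∀ x t, HasDerivAt (fun u => φ x u) (f (φ x t)) t

/-- The set of positive times at which the flow starting at `x` lies in `U`. -/
def hitTimes (φ : State → ℝ → State) (U : Set State) (x : State) : Set ℝ :=
  {t : ℝ | 0 < t ∧ φ x t ∈ U}

/-- The return time `τ_{f,U}(x)` is finite. -/
def hits (φ : State → ℝ → State) (U : Set State) (x : State) : Prop :=
  (hitTimes φ U x).Nonempty

/-- The return time `τ_{f,U}(x)` (a real number, junk value if the set is empty). -/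
def retTime (φ : State → ℝ → State) (U : Set State) (x : State) : ℝ :=
  sInf (hitTimes φ U x)

/-- The return time `τ_{f,U}(x)` as an extended real (`⊤` if the flow never returns to `U`). -/
def retTimeE (φ : State → ℝ → State) (U : Set State) (x : State) : EReal :=
  sInf (Real.toEReal '' hitTimes φ U x)

/-- The Poincaré map `P_{f,U}(x) = φ(x, τ_{f,U}(x))`. -/
def pMap (φ : State → ℝ → State) (U : Set State) (x : State) : State :=
  φ x (retTime φ U x)

/-- `y` is a globally asymptotically stable equilibrium for the flow `φ`. -/
def IsGASFlow (φ : State → ℝ → State) (y : State) : Prop :=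
  (∀ ε > 0, ∃ δ > 0, ∀ x : State, ‖x - y‖ < δ → ∀ t : ℝ, 0 ≤ t → ‖φ x t - y‖ < ε) ∧
  (∀ x : State, Tendsto (fun t => φ x t) atTop (𝓝 y))

/-- The two modes of a bi-modal hybrid automaton. -/
inductive Mode | one | two
deriving DecidableEq

/-- The other mode (target of the unique transition out of a mode). -/
def Mode.other : Mode → Mode
  | .one => .two
  | .two => .one

/-- A planar bi-modal hybrid automaton, with its two flows, and a unique
equilibrium `x*` of mode 1 lying in the interior of `Dom 1`. -/
structure BMHA where
  f1 : State → State
  f2 : State → State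
  g : State → ℝ
  φ1 : State → ℝ → State
  φ2 : State → ℝ → State
  lip1 : ∃ K, LipschitzWith K f1
  lip2 : ∃ K, LipschitzWith K f2
  g_smooth : ContDiff ℝ 1 g
  flow1 : IsFlow f1 φ1
  flow2 : IsFlow f2 φ2
  xstar : State
  equilibrium : f1 xstar = 0
  xstar_interior : g xstar < 0

/-- The vector field of each mode. -/
def BMHA.field (S : BMHA) : Mode → State → State
  | .one => S.f1
  | .two => S.f2

/-- The flow of each mode. -/
def BMHA.flow (S : BMHA) : Mode → State → ℝ → State
  | .one => S.φ1
  | .two => S.φ2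

/-- The domain of each mode: `Dom 1 = {g ≤ 0}`, `Dom 2 = {g ≥ 0}`. -/
def BMHA.Dom (S : BMHA) : Mode → Set State
  | .one => {x | S.g x ≤ 0}
  | .two => {x | 0 ≤ S.g x}

/-- The switching surface `G = {g = 0}`. -/
def BMHA.Gset (S : BMHA) : Set State := {x | S.g x = 0}

/-- The guard of the unique transition out of mode `q`:
`Guard (1→2) = {g ≥ 0}`, `Guard (2→1) = {g ≤ 0}`. -/
def BMHA.Guard (S : BMHA) : Mode → Set State
  | .one => {x | 0 ≤ S.g x}
  | .two => {x | S.g x ≤ 0}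

/-- A point of a hybrid trajectory: mode, time, state. -/
abbrev HPoint := Mode × ℝ × State

/-- The data of a (finite) hybrid trajectory of the transition-delayed automaton `S_H`:
times `t 0 < t 1 < ⋯ < t J`, modes `q j`, initial states `xs j` of each segment, and
delays `h j ∈ [0, H]`; on segment `j` the state follows the flow of mode `q j`, stays in
`Dom (q j)` until `t (j+1) - h j`, at which time it is in the guard of the transition
`(q j, q (j+1))`, and stays in that guard during the final `h j` time units, after which
the (identity-reset) transition to the alternate mode occurs. -/
structure TrajSpec (S : BMHA) (H : ℝ) where
  J : ℕ
  Jpos : 0 < J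
  t : ℕ → ℝ
  q : ℕ → Mode
  xs : ℕ → State
  h : ℕ → ℝ
  t_mono : ∀ j, j < J → t j < t (j + 1)
  h_nonneg : ∀ j, j + 1 < J → 0 ≤ h j
  h_le : ∀ j, j + 1 < J → h j ≤ H
  h_bound : ∀ j, j + 1 < J → t j ≤ t (j + 1) - h j
  alternate : ∀ j, j + 1 < J → q (j + 1) = (q j).other
  inDom : ∀ j, j + 1 < J → ∀ u ∈ Set.Icc (t j) (t (j + 1) - h j),
    S.flow (q j) (xs j) (u - t j) ∈ S.Dom (q j)
  inGuard : ∀ j, j + 1 < J → ∀ u ∈ Set.Icc (t (j + 1) - h j) (t (j + 1)),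
    S.flow (q j) (xs j) (u - t j) ∈ S.Guard (q j)
  reset : ∀ j, j + 1 < J → xs (j + 1) = S.flow (q j) (xs j) (t (j + 1) - t j)
  lastDom : ∀ u ∈ Set.Icc (t (J - 1)) (t J),
    S.flow (q (J - 1)) (xs (J - 1)) (u - t (J - 1)) ∈ S.Dom (q (J - 1))

/-- The hybrid trajectory (a subset of `Q × ℝ × ℝ²`) described by trajectory data. -/
def TrajSpec.toSet {S : BMHA} {H : ℝ} (D : TrajSpec S H) : Set HPoint :=
  {p | ∃ j < D.J, p.1 = D.q j ∧ p.2.1 ∈ Set.Icc (D.t j) (D.t (j + 1)) ∧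
    p.2.2 = S.flow (D.q j) (D.xs j) (p.2.1 - D.t j)}

/-- `T` is a hybrid trajectory of the transition-delayed automaton `S_H`. -/
def IsDelayedTraj (S : BMHA) (H : ℝ) (T : Set HPoint) : Prop :=
  ∃ D : TrajSpec S H, T = D.toSet

/-- The data of a complete (indefinitely extended) hybrid trajectory of `S_H`;
either infinitely many transitions (`J = ⊤`, with divergent transition times), or
finitely many, followed by a final segment defined for all subsequent times. -/
structure CTrajSpec (S : BMHA) (H : ℝ) where
  J : ℕ∞
  Jpos : 1 ≤ J
  t : ℕ → ℝ
  q : ℕ → Mode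
  xs : ℕ → State
  h : ℕ → ℝ
  t_mono : ∀ j : ℕ, ((j : ℕ∞) + 1) < J → t j < t (j + 1)
  h_nonneg : ∀ j : ℕ, ((j : ℕ∞) + 1) < J → 0 ≤ h j
  h_le : ∀ j : ℕ, ((j : ℕ∞) + 1) < J → h j ≤ H
  h_bound : ∀ j : ℕ, ((j : ℕ∞) + 1) < J → t j ≤ t (j + 1) - h j
  alternate : ∀ j : ℕ, ((j : ℕ∞) + 1) < J → q (j + 1) = (q j).other
  inDom : ∀ j : ℕ, ((j : ℕ∞) + 1) < J → ∀ u ∈ Set.Icc (t j) (t (j + 1) - h j),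
    S.flow (q j) (xs j) (u - t j) ∈ S.Dom (q j)
  inGuard : ∀ j : ℕ, ((j : ℕ∞) + 1) < J → ∀ u ∈ Set.Icc (t (j + 1) - h j) (t (j + 1)),
    S.flow (q j) (xs j) (u - t j) ∈ S.Guard (q j)
  reset : ∀ j : ℕ, ((j : ℕ∞) + 1) < J → xs (j + 1) = S.flow (q j) (xs j) (t (j + 1) - t j)
  nonZeno : J = ⊤ → Tendsto t atTop atTop
  lastDom : ∀ n : ℕ, J = (n : ℕ∞) + 1 → ∀ u : ℝ, t n ≤ u →
    S.flow (q n) (xs n) (u - t n) ∈ S.Dom (q n)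

/-- The set of (mode, time, state) points of a complete trajectory. -/
def CTrajSpec.toSet {S : BMHA} {H : ℝ} (D : CTrajSpec S H) : Set HPoint :=
  {p | ∃ j : ℕ, ((j : ℕ∞) + 1) ≤ D.J ∧ p.1 = D.q j ∧ D.t j ≤ p.2.1 ∧
    (((j : ℕ∞) + 1) < D.J → p.2.1 ≤ D.t (j + 1)) ∧
    p.2.2 = S.flow (D.q j) (D.xs j) (p.2.1 - D.t j)}

/-- The state along the complete trajectory converges to `y` as time tends to infinity. -/
def CTrajSpec.convergesTo {S : BMHA} {H : ℝ} (D : CTrajSpec S H) (y : State) : Prop :=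
  ∀ ε > 0, ∃ τ : ℝ, ∀ p ∈ D.toSet, τ ≤ p.2.1 → ‖p.2.2 - y‖ < ε

/-- `x*` is a globally asymptotically stable equilibrium of `S_H`: trajectories starting
near `x*` stay near `x*`, and every complete trajectory converges to `x*`. -/
def IsGAS (S : BMHA) (H : ℝ) : Prop :=
  (∀ ε > 0, ∃ δ > 0,
    (∀ D : TrajSpec S H, ‖D.xs 0 - S.xstar‖ < δ →
      ∀ p ∈ D.toSet, ‖p.2.2 - S.xstar‖ < ε) ∧
    (∀ D : CTrajSpec S H, ‖D.xs 0 - S.xstar‖ < δ →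
      ∀ p ∈ D.toSet, ‖p.2.2 - S.xstar‖ < ε)) ∧
  (∀ D : CTrajSpec S H, D.convergesTo S.xstar)

/-- A hybrid trajectory `T` is a closed orbit: there are `(q₀,t₀,x₀), (q̃,t̃,x̃), (q̄,t̄,x̄) ∈ T`
with `q̄ = q₀`, `t₀ < t̃ < t̄`, `x̃ ≠ x̄` and `x̄ = x₀`. -/
def IsClosedOrbit (T : Set HPoint) : Prop :=
  ∃ p0 pm pe : HPoint, p0 ∈ T ∧ pm ∈ T ∧ pe ∈ T ∧
    pe.1 = p0.1 ∧ p0.2.1 < pm.2.1 ∧ pm.2.1 < pe.2.1 ∧ pm.2.2 ≠ pe.2.2 ∧ pe.2.2 = p0.2.2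

/-- The transition-delayed automaton `S_H` admits a closed orbit. -/
def AdmitsClosedOrbit (S : BMHA) (H : ℝ) : Prop :=
  ∃ T : Set HPoint, IsDelayedTraj S H T ∧ IsClosedOrbit T

/-- `π(T)`: the set of states visited by the trajectory `T`. -/
def projT (T : Set HPoint) : Set State := {x | ∃ q t, (q, t, x) ∈ T}

/-- `T|_{[a,b]}`: restriction of the trajectory to a time interval. -/
def restr (T : Set HPoint) (a b : ℝ) : Set HPoint := {p ∈ T | a ≤ p.2.1 ∧ p.2.1 ≤ b}

/-- `T|_{[a,∞)}`: restriction of the trajectory to all times `≥ a`. -/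
def restrFrom (T : Set HPoint) (a : ℝ) : Set HPoint := {p ∈ T | a ≤ p.2.1}

/-- `τ_T(U, t₀) = inf {t | (q,t,x) ∈ T, t > t₀, x ∈ U}`. -/
def tauT (T : Set HPoint) (U : Set State) (t0 : ℝ) : ℝ :=
  sInf {t : ℝ | ∃ p ∈ T, p.2.1 = t ∧ t0 < t ∧ p.2.2 ∈ U}

/-- `P_T(U, t₀) = {(q,t,x) ∈ T | t = τ_T(U, t₀)}`: the first intersection of `T`
with `U` after time `t₀`. -/
def PT (T : Set HPoint) (U : Set State) (t0 : ℝ) : Set HPoint :=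
  {p ∈ T | p.2.1 = tauT T U t0}

/-- `[x,y]_X`: the union of all paths in `X` from `x` to `y`. -/
def pathsBetween (X : Set State) (x y : State) : Set State :=
  {z | ∃ γ : Path x y, (∀ u, γ u ∈ X) ∧ ∃ u, γ u = z}

/-- `U` is a path component of `X`. -/
def IsPathComponentOf (U X : Set State) : Prop :=
  ∃ x ∈ X, U = pathComponentIn X x

/-- The Poincaré curve `S_p = {x | s x = 0, ∇s(x)·f₁(x) > 0}` determined by `s`. -/
def PCurve (f1 : State → State) (s : State → ℝ) : Set State :=
  {x | s x = 0 ∧ 0 < ⟪gradient s x, f1 x⟫}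

/-- `s` defines a Poincaré curve for the field `f1`: `s` is continuously differentiable and
the curve is disjoint from the switching surface `{g = 0}`. -/
def IsPCurveFor (f1 : State → State) (g s : State → ℝ) : Prop :=
  ContDiff ℝ 1 s ∧ PCurve f1 s ∩ {x | g x = 0} = ∅

/-- Assumption 1: `S_p` has a single path component, `cl(S_p) = S_p ∪ {x*}`, and the
Euclidean norm restricted to `S_p` is injective. -/
def Assumption1 (f1 : State → State) (s : State → ℝ) (xstar : State) : Prop :=
  IsPathConnected (PCurve f1 s) ∧
  closure (PCurve f1 s) = PCurve f1 s ∪ {xstar} ∧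
  Set.InjOn (fun x : State => ‖x‖) (PCurve f1 s)

/-- `G̃ = {x ∈ G | ∇g(x)·f₂(x) < 0}`. -/
def BMHA.Gtilde (S : BMHA) : Set State :=
  {x | S.g x = 0 ∧ ⟪gradient S.g x, S.f2 x⟫ < 0}

/-- `T₂ = inf_{x ∈ G̃} τ_{f₂,S_p}(x)` (an extended real). -/
def T2 (S : BMHA) (s : State → ℝ) : EReal :=
  ⨅ x ∈ S.Gtilde, retTimeE S.φ2 (PCurve S.f1 s) x

/-- `D = {φ_{f₂}(x,h) | x ∈ G̃, 0 ≤ h < T₂}`. -/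
def Dset (S : BMHA) (s : State → ℝ) : Set State :=
  {y | ∃ x ∈ S.Gtilde, ∃ hd : ℝ, 0 ≤ hd ∧ (hd : EReal) < T2 S s ∧ y = S.φ2 x hd}

/-- Assumption 2: for every `x ∈ D`, `τ_{f₁,S_p}(x)` is finite and smaller
than `τ_{f₁,G}(x)`. -/
def Assumption2 (S : BMHA) (s : State → ℝ) : Prop :=
  ∀ x ∈ Dset S s, hits S.φ1 (PCurve S.f1 s) x ∧
    ((retTime S.φ1 (PCurve S.f1 s) x : EReal) < retTimeE S.φ1 S.Gset x)

/-- Assumption 3: for every `x` in the interior of `Dom 2`, the point `y = P_{f₂,G}(x)`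
is defined and satisfies `∇g(y)·f₂(y) ≠ 0`. -/
def Assumption3 (S : BMHA) : Prop :=
  ∀ x ∈ interior {y : State | 0 ≤ S.g y}, hits S.φ2 S.Gset x ∧
    ⟪gradient S.g (pMap S.φ2 S.Gset x), S.f2 (pMap S.φ2 S.Gset x)⟫ ≠ 0

/-- `S̃_p = {x ∈ S_p | τ_{f₁,G}(x) finite, ∇g(P_{f₁,G}(x))·f₁(P_{f₁,G}(x)) > 0}`. -/
def SpTilde (S : BMHA) (s : State → ℝ) : Set State :=
  {x ∈ PCurve S.f1 s | hits S.φ1 S.Gset x ∧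
    0 < ⟪gradient S.g (pMap S.φ1 S.Gset x), S.f1 (pMap S.φ1 S.Gset x)⟫}

/-- Assumption 4: for every `x ∈ S̃_p`, the point `y = P_{f₁,G}(x)` satisfies
`∇g(y)·f₁(y) ≠ 0`. -/
def Assumption4 (S : BMHA) (s : State → ℝ) : Prop :=
  ∀ x ∈ SpTilde S s,
    ⟪gradient S.g (pMap S.φ1 S.Gset x), S.f1 (pMap S.φ1 S.Gset x)⟫ ≠ 0

/-- The delayed Poincaré map `H^{h₁,h₂}(x₀) = P_{f₁,S_p}(x₄)` where
`x₁ = P_{f₁,G}(x₀)`, `x₂ = φ_{f₁}(x₁,h₁)`, `x₃ = P_{f₂,G}(x₂)`, `x₄ = φ_{f₂}(x₃,h₂)`. -/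
def dpm (S : BMHA) (s : State → ℝ) (h1 h2 : ℝ) (x0 : State) : State :=
  pMap S.φ1 (PCurve S.f1 s)
    (S.φ2 (pMap S.φ2 S.Gset (S.φ1 (pMap S.φ1 S.Gset x0) h1)) h2)

/-- The maximum stable delay `σ(S) = sup {H ≥ 0 | x* is a GAS equilibrium of S_H}`. -/
def sigmaMSD (S : BMHA) : EReal :=
  sSup (Real.toEReal '' {H : ℝ | 0 ≤ H ∧ IsGAS S H})

/-- `σ̂(S) = inf {H ≥ 0 | S_H admits a closed orbit}`. -/
def sigmaHat (S : BMHA) : EReal :=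
  sInf (Real.toEReal '' {H : ℝ | 0 ≤ H ∧ AdmitsClosedOrbit S H})


lemma flow_continuous' {f : State → State} {φ : State → ℝ → State}
    (hφ : IsFlow f φ) (x : State) : Continuous (φ x) :=
  continuous_iff_continuousAt.2 fun t => (hφ.2 x t).continuousAt

lemma lipschitz_on_closedBall' {f : State → State} (hf : ContDiff ℝ 1 f)
    (c : State) (R : ℝ) : ∃ K : NNReal, LipschitzOnWith K f (Metric.closedBall c R) := by
  obtain ⟨M, hM⟩ := (isCompact_closedBall c R).exists_bound_of_continuousOn
    ((hf.continuous_fderiv one_ne_zero).continuousOn)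
  refine ⟨M.toNNReal, LipschitzOnWith.of_dist_le_mul fun x hx y hy => ?_⟩
  have h1 : ‖f x - f y‖ ≤ M * ‖x - y‖ :=
    (convex_closedBall c R).norm_image_sub_le_of_norm_fderiv_le
      (fun z _ => (hf.differentiable one_ne_zero).differentiableAt)
      (fun z hz => hM z hz) hy hx
  calc dist (f x) (f y) = ‖f x - f y‖ := dist_eq_norm _ _
    _ ≤ M * ‖x - y‖ := h1
    _ ≤ M.toNNReal * dist x y := by
        rw [dist_eq_norm]
        exact mul_le_mul_of_nonneg_right (Real.le_coe_toNNReal M) (norm_nonneg _)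

lemma flow_ucont {f : State → State} {φ : State → ℝ → State}
    (hf : ContDiff ℝ 1 f) (hφ : IsFlow f φ) (x₀ : State) (T : ℝ) {ε : ℝ} (hε : 0 < ε) :
    ∃ δ > 0, ∀ x, dist x x₀ < δ → ∀ t ∈ Set.Icc (0:ℝ) T, dist (φ x t) (φ x₀ t) < ε := by
  rcases lt_or_ge T 0 with hT | hT
  · exact ⟨1, one_pos, fun x _ t ht => absurd (ht.1.trans ht.2) (not_le.2 hT)⟩
  obtain ⟨R, hR⟩ := (isCompact_Icc.image (flow_continuous' hφ x₀)).isBounded.subset_closedBall 0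
  obtain ⟨K, hK⟩ := lipschitz_on_closedBall' hf 0 (R + ε)
  set δ : ℝ := (ε / 2) * Real.exp (-(K * T)) with hδdef
  have hδpos : 0 < δ := by positivity
  have hδhalf : δ ≤ ε / 2 := by
    have h1 : Real.exp (-(K * T)) ≤ 1 := by
      rw [show (1:ℝ) = Real.exp 0 by rw [Real.exp_zero]]
      exact Real.exp_le_exp.2 (neg_nonpos.2 (mul_nonneg K.coe_nonneg hT))
    nlinarith
  refine ⟨δ, hδpos, fun x hx => ?_⟩
  by_contra hcon
  push_neg at hcon
  obtain ⟨t', ht', hdist⟩ := hcon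
  set S : Set ℝ := {t | t ∈ Set.Icc (0:ℝ) T ∧ ε ≤ dist (φ x t) (φ x₀ t)} with hSdef
  have hSne : S.Nonempty := ⟨t', ht', hdist⟩
  have hScl : IsClosed S :=
    (isClosed_Icc.inter (isClosed_le continuous_const
      ((flow_continuous' hφ x).dist (flow_continuous' hφ x₀))))
  have hSbd : BddBelow S := ⟨0, fun t ht => ht.1.1⟩
  set t₁ := sInf S with ht₁def
  have ht₁S : t₁ ∈ S := hScl.csInf_mem hSne hSbd
  have h0S : (0:ℝ) ∉ S := by
    intro h0
    have h2 := h0.2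
    rw [hφ.1 x, hφ.1 x₀] at h2
    linarith
  have ht₁pos : 0 < t₁ := ht₁S.1.1.lt_of_ne (fun h => h0S (by rw [h]; exact ht₁S))
  have hIco : ∀ t ∈ Set.Ico (0:ℝ) t₁, dist (φ x t) (φ x₀ t) < ε := by
    intro t ht
    by_contra hge
    push_neg at hge
    exact absurd (csInf_le hSbd ⟨⟨ht.1, ht.2.le.trans ht₁S.1.2⟩, hge⟩) (not_le.2 ht.2)
  have hmemx₀ : ∀ t ∈ Set.Ico (0:ℝ) t₁, φ x₀ t ∈ Metric.closedBall (0:State) (R + ε) := by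
    intro t ht
    exact Metric.closedBall_subset_closedBall (by linarith)
      (hR ⟨t, ⟨ht.1, ht.2.le.trans ht₁S.1.2⟩, rfl⟩)
  have hmemx : ∀ t ∈ Set.Ico (0:ℝ) t₁, φ x t ∈ Metric.closedBall (0:State) (R + ε) := by
    intro t ht
    have h1 := hIco t ht
    have h2 : dist (φ x₀ t) (0:State) ≤ R :=
      Metric.mem_closedBall.1 (hR ⟨t, ⟨ht.1, ht.2.le.trans ht₁S.1.2⟩, rfl⟩)
    have h3 := dist_triangle (φ x t) (φ x₀ t) (0:State)
    exact Metric.mem_closedBall.2 (by linarith)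
  have key := dist_le_of_trajectories_ODE_of_mem (v := fun _ y => f y)
    (s := fun _ => Metric.closedBall (0:State) (R + ε)) (K := K)
    (fun _ _ => hK)
    ((flow_continuous' hφ x).continuousOn)
    (fun t _ => (hφ.2 x t).hasDerivWithinAt)
    hmemx
    ((flow_continuous' hφ x₀).continuousOn)
    (fun t _ => (hφ.2 x₀ t).hasDerivWithinAt)
    hmemx₀
    (le_of_lt (by rw [hφ.1 x, hφ.1 x₀]; exact hx))
    t₁ (Set.right_mem_Icc.2 ht₁pos.le)
  have hexp : δ * Real.exp (K * (t₁ - 0)) ≤ δ * Real.exp (K * T) := by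
    apply mul_le_mul_of_nonneg_left _ hδpos.le
    apply Real.exp_le_exp.2
    rw [sub_zero]
    exact mul_le_mul_of_nonneg_left ht₁S.1.2 K.coe_nonneg
  have heq : δ * Real.exp ((K:ℝ) * T) = ε / 2 := by
    rw [hδdef, mul_assoc, ← Real.exp_add, neg_add_cancel, Real.exp_zero, mul_one]
  have : dist (φ x t₁) (φ x₀ t₁) < ε := by
    calc dist (φ x t₁) (φ x₀ t₁) ≤ δ * Real.exp (K * (t₁ - 0)) := key
      _ ≤ ε / 2 := by rw [← heq]; exact hexp
      _ < ε := by linarith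
  exact absurd this (not_lt.2 ht₁S.2)

lemma gpsi_hasDerivAt {f : State → State} {φ : State → ℝ → State}
    (hφ : IsFlow f φ) {g : State → ℝ} (hg : ContDiff ℝ 1 g) (x : State) (t : ℝ) :
    HasDerivAt (fun u => g (φ x u)) ⟪gradient g (φ x t), f (φ x t)⟫ t := by
  have h1 : HasFDerivAt g (fderiv ℝ g (φ x t)) (φ x t) :=
    ((hg.differentiable one_ne_zero) (φ x t)).hasFDerivAt
  have h2 := h1.comp_hasDerivAt t (hφ.2 x t)
  refine h2.congr_deriv ?_
  rw [← toDual_gradient, InnerProductSpace.toDual_apply_apply]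

lemma sign_of_near_slope {c u : ℝ} (h : |u - c| < |c| / 2) : 0 < c * u := by
  rcases abs_lt.1 h with ⟨h1, h2⟩
  rcases le_or_gt 0 c with hc0 | hc0
  · rw [abs_of_nonneg hc0] at h1 h2; nlinarith
  · rw [abs_of_neg hc0] at h1 h2; nlinarith


/-- Lemma 6: continuity of the Poincaré map onto the switching surface
on an open set where it is defined and the crossing is transversal. -/
theorem poincare_map_continuous (f : State → State) (φ : State → ℝ → State)
    (hf : ContDiff ℝ 1 f) (hφ : IsFlow f φ)
    (g : State → ℝ) (hg : ContDiff ℝ 1 g)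
    (A : Set State) (hA : IsOpen A) (hdisj : A ∩ {x | g x = 0} = ∅)
    (hdef : ∀ x ∈ A, hits φ {y | g y = 0} x ∧
      ⟪gradient g (pMap φ {y | g y = 0} x), f (pMap φ {y | g y = 0} x)⟫ ≠ 0) :
    ContinuousOn (pMap φ {y | g y = 0}) A := by
  have hgc : Continuous g := hg.continuous
  have hcontφ : ∀ x, Continuous (φ x) := flow_continuous' hφ
  intro x₀ hx₀
  apply ContinuousAt.continuousWithinAt
  rw [Metric.continuousAt_iff]
  intro ε' hε'
  set G : Set State := {y | g y = 0} with hGdef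
  have hgx₀ : g x₀ ≠ 0 := fun h => Set.eq_empty_iff_forall_notMem.1 hdisj x₀ ⟨hx₀, h⟩
  obtain ⟨hhits, htrans⟩ := hdef x₀ hx₀
  set τ := retTime φ G x₀ with hτdef
  set ψ : ℝ → ℝ := fun t => g (φ x₀ t) with hψdef
  have hψc : Continuous ψ := hgc.comp (hcontφ x₀)
  -- lower bound on hit times near 0
  obtain ⟨a, hapos, ha⟩ : ∃ a > 0, ∀ t : ℝ, |t| < a → ψ t ≠ 0 := by
    have hU : IsOpen (ψ ⁻¹' {(0:ℝ)}ᶜ) := (isOpen_compl_singleton).preimage hψc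
    have h0U : (0:ℝ) ∈ ψ ⁻¹' {(0:ℝ)}ᶜ := by
      simp only [Set.mem_preimage, Set.mem_compl_iff, Set.mem_singleton_iff, hψdef]
      rw [hφ.1 x₀]; exact hgx₀
    obtain ⟨a, hapos, hball⟩ := Metric.isOpen_iff.1 hU 0 h0U
    refine ⟨a, hapos, fun t ht => ?_⟩
    have : t ∈ Metric.ball (0:ℝ) a := by rwa [Metric.mem_ball, Real.dist_eq, sub_zero]
    exact hball this
  have hht : hitTimes φ G x₀ = {t | a ≤ t ∧ ψ t = 0} := by
    ext t
    constructor
    · rintro ⟨htpos, htG⟩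
      refine ⟨?_, htG⟩
      by_contra hlt
      push_neg at hlt
      exact ha t (by rw [abs_of_pos htpos]; exact hlt) htG
    · rintro ⟨hta, htG⟩
      exact ⟨hapos.trans_le hta, htG⟩
  have hhtclosed : IsClosed (hitTimes φ G x₀) := by
    rw [hht]
    exact isClosed_Ici.inter (isClosed_eq hψc continuous_const)
  have hbdd : BddBelow (hitTimes φ G x₀) := ⟨0, fun t ht => ht.1.le⟩
  have hτmem : τ ∈ hitTimes φ G x₀ := hhtclosed.csInf_mem hhits hbdd
  have hτpos : 0 < τ := hτmem.1
  have hτG : ψ τ = 0 := hτmem.2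
  have hτmin : ∀ t, 0 < t → t < τ → ψ t ≠ 0 := fun t ht0 htτ hgt =>
    absurd (csInf_le hbdd ⟨ht0, hgt⟩) (not_le.2 htτ)
  set z := φ x₀ τ with hzdef
  set c := ⟪gradient g z, f z⟫ with hcdef
  have hc : c ≠ 0 := htrans
  have hcpos : 0 < |c| / 2 := by positivity
  -- derivative of ψ at τ
  have hψd : HasDerivAt ψ c τ := gpsi_hasDerivAt hφ hg x₀ τ
  have hslope := hasDerivAt_iff_tendsto_slope.1 hψd
  obtain ⟨h₀, hh₀pos, hh₀⟩ := Metric.tendsto_nhdsWithin_nhds.1 hslope (|c| / 2) hcpos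
  -- continuity of φ x₀ at τ
  obtain ⟨h₁, hh₁pos, hh₁⟩ := Metric.continuousAt_iff.1 (hcontφ x₀).continuousAt (ε' / 2)
    (by linarith)
  -- choose h
  set h : ℝ := min (min (h₀ / 2) (h₁ / 2)) (τ / 2) with hhdef
  have hhpos : 0 < h := lt_min (lt_min (by linarith) (by linarith)) (by linarith)
  have hhτ : h < τ := (min_le_right _ _).trans_lt (by linarith)
  have hhh₀ : h < h₀ := ((min_le_left _ _).trans (min_le_left _ _)).trans_lt (by linarith)
  have hhh₁ : h < h₁ := ((min_le_left _ _).trans (min_le_right _ _)).trans_lt (by linarith)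
  -- sign facts at τ ± h
  have hsign : ∀ s : ℝ, s ≠ 0 → |s| < h₀ → 0 < c * (ψ (τ + s) / s) := by
    intro s hs0 hsh
    have hmem : τ + s ∈ ({τ}ᶜ : Set ℝ) := by
      simp only [Set.mem_compl_iff, Set.mem_singleton_iff]
      intro hcontra
      exact hs0 (by linarith)
    have hdist : dist (τ + s) τ < h₀ := by
      rw [Real.dist_eq, add_sub_cancel_left]; exact hsh
    have := hh₀ hmem hdist
    rw [Real.dist_eq] at this
    have hsl : slope ψ τ (τ + s) = ψ (τ + s) / s := by
      rw [slope_def_field, hτG, sub_zero, add_sub_cancel_left]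
    rw [hsl] at this
    exact sign_of_near_slope this
  have hp0 : 0 < c * ψ (τ + h) := by
    have := hsign h hhpos.ne' (by rwa [abs_of_pos hhpos])
    have heq : ψ (τ + h) = ψ (τ + h) / h * h := (div_mul_cancel₀ _ hhpos.ne').symm
    calc (0:ℝ) < c * (ψ (τ + h) / h) * h := mul_pos this hhpos
      _ = c * ψ (τ + h) := by rw [mul_assoc, ← heq]
  have hm0 : c * ψ (τ - h) < 0 := by
    have h1 := hsign (-h) (neg_ne_zero.2 hhpos.ne') (by rwa [abs_neg, abs_of_pos hhpos])
    rw [show τ + -h = τ - h by ring] at h1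
    have heq : ψ (τ - h) = ψ (τ - h) / (-h) * (-h) := (div_mul_cancel₀ _ (neg_ne_zero.2 hhpos.ne')).symm
    have := mul_pos h1 hhpos
    calc c * ψ (τ - h) = c * (ψ (τ - h) / (-h)) * (-h) := by rw [mul_assoc, ← heq]
      _ < 0 := by nlinarith
  -- minimum of |ψ| on [0, τ - h]
  have hIccne : (Set.Icc (0:ℝ) (τ - h)).Nonempty := ⟨0, le_refl 0, by linarith⟩
  obtain ⟨tm, htm, hmin⟩ := isCompact_Icc.exists_isMinOn hIccne
    ((continuous_abs.comp hψc).continuousOn)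
  set m : ℝ := |ψ tm| with hmdef
  have hψne : ∀ t ∈ Set.Icc (0:ℝ) (τ - h), ψ t ≠ 0 := by
    intro t ht
    rcases eq_or_lt_of_le ht.1 with h0 | h0
    · rw [← h0, hψdef]
      simpa only [hφ.1 x₀] using hgx₀
    · exact hτmin t h0 (by linarith [ht.2])
  have hmpos : 0 < m := abs_pos.2 (hψne tm htm)
  -- the tube around the trajectory up to τ - h
  set Γ' : Set State := φ x₀ '' Set.Icc 0 (τ - h) with hΓdef
  have hΓcomp : IsCompact Γ' := isCompact_Icc.image (hcontφ x₀)
  have hVopen : IsOpen {y : State | m / 2 < |g y|} :=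
    isOpen_lt continuous_const (continuous_abs.comp hgc)
  have hΓV : Γ' ⊆ {y : State | m / 2 < |g y|} := by
    rintro y ⟨t, ht, rfl⟩
    have := hmin ht
    simp only [Set.mem_setOf_eq]
    calc m / 2 < m := by linarith
      _ ≤ |ψ t| := this
  obtain ⟨ρ, hρpos, hρ⟩ := hΓcomp.exists_thickening_subset_open hVopen hΓV
  -- sign-preserving balls at φ x₀ (τ ± h)
  have hWpopen : IsOpen {y : State | 0 < c * g y} :=
    isOpen_lt continuous_const (continuous_const.mul hgc)
  have hWmopen : IsOpen {y : State | c * g y < 0} :=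
    isOpen_lt (continuous_const.mul hgc) continuous_const
  obtain ⟨εp, hεppos, hεp⟩ := Metric.isOpen_iff.1 hWpopen (φ x₀ (τ + h)) hp0
  obtain ⟨εm, hεmpos, hεm⟩ := Metric.isOpen_iff.1 hWmopen (φ x₀ (τ - h)) hm0
  -- final δ
  set ε₀ : ℝ := min (min ρ (ε' / 2)) (min εp εm) with hε₀def
  have hε₀pos : 0 < ε₀ := lt_min (lt_min hρpos (by linarith)) (lt_min hεppos hεmpos)
  obtain ⟨δ, hδpos, hδ⟩ := flow_ucont hf hφ x₀ (τ + h) hε₀pos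
  refine ⟨δ, hδpos, fun {x} hx => ?_⟩
  have hτh0 : 0 < τ - h := by linarith
  have F : ∀ t ∈ Set.Icc (0:ℝ) (τ + h), dist (φ x t) (φ x₀ t) < ε₀ := hδ x hx
  -- (1) no zeros of g ∘ φ x on [0, τ - h]
  have hnozero : ∀ t ∈ Set.Icc (0:ℝ) (τ - h), g (φ x t) ≠ 0 := by
    intro t ht
    have htT : t ∈ Set.Icc (0:ℝ) (τ + h) := ⟨ht.1, by linarith [ht.2]⟩
    have hd : dist (φ x t) (φ x₀ t) < ρ :=
      (F t htT).trans_le ((min_le_left _ _).trans (min_le_left _ _))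
    have : φ x t ∈ Metric.thickening ρ Γ' :=
      Metric.mem_thickening_iff.2 ⟨φ x₀ t, ⟨t, ht, rfl⟩, hd⟩
    have := hρ this
    simp only [Set.mem_setOf_eq] at this
    intro hzero
    rw [hzero, abs_zero] at this
    linarith
  -- (2) sign at τ + h
  have hxp : 0 < c * g (φ x (τ + h)) := by
    have hmem : τ + h ∈ Set.Icc (0:ℝ) (τ + h) := ⟨by linarith, le_refl _⟩
    have hd : dist (φ x (τ + h)) (φ x₀ (τ + h)) < εp :=
      (F _ hmem).trans_le ((min_le_right _ _).trans (min_le_left _ _))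
    exact hεp (Metric.mem_ball.2 hd)
  -- (3) sign at τ - h
  have hxm : c * g (φ x (τ - h)) < 0 := by
    have hmem : τ - h ∈ Set.Icc (0:ℝ) (τ + h) := ⟨by linarith, by linarith⟩
    have hd : dist (φ x (τ - h)) (φ x₀ (τ - h)) < εm :=
      (F _ hmem).trans_le ((min_le_right _ _).trans (min_le_right _ _))
    exact hεm (Metric.mem_ball.2 hd)
  -- (4) IVT gives a hit time in [τ - h, τ + h]
  have hcont' : ContinuousOn (fun u => c * g (φ x u)) (Set.Icc (τ - h) (τ + h)) :=
    (continuous_const.mul (hgc.comp (hcontφ x))).continuousOn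
  have hivt := intermediate_value_Icc (by linarith : τ - h ≤ τ + h) hcont'
  have h0mem : (0:ℝ) ∈ Set.Icc (c * g (φ x (τ - h))) (c * g (φ x (τ + h))) :=
    ⟨hxm.le, hxp.le⟩
  obtain ⟨ts, hts, htse⟩ := hivt h0mem
  have htsG : g (φ x ts) = 0 := by
    rcases mul_eq_zero.1 htse with h | h
    · exact absurd h hc
    · exact h
  have htshit : ts ∈ hitTimes φ G x := ⟨by linarith [hts.1], htsG⟩
  have hbddx : BddBelow (hitTimes φ G x) := ⟨0, fun t ht => ht.1.le⟩
  set τx := retTime φ G x with hτxdef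
  have hτxub : τx ≤ τ + h := (csInf_le hbddx htshit).trans hts.2
  have hτxlb : τ - h ≤ τx := by
    apply le_csInf ⟨ts, htshit⟩
    intro b hb
    by_contra hlt
    push_neg at hlt
    exact hnozero b ⟨hb.1.le, hlt.le⟩ hb.2
  -- conclude
  have hτxIcc : τx ∈ Set.Icc (0:ℝ) (τ + h) := ⟨by linarith, hτxub⟩
  have hd1 : dist (φ x τx) (φ x₀ τx) < ε₀ := F τx hτxIcc
  have hd1' : dist (φ x τx) (φ x₀ τx) < ε' / 2 :=
    hd1.trans_le ((min_le_left _ _).trans (min_le_right _ _))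
  have hd2 : dist (φ x₀ τx) (φ x₀ τ) < ε' / 2 := by
    apply hh₁
    rw [Real.dist_eq]
    have h1 : |τx - τ| ≤ h := abs_le.2 ⟨by linarith, by linarith⟩
    linarith
  calc dist (pMap φ G x) (pMap φ G x₀)
      = dist (φ x τx) (φ x₀ τ) := rfl
    _ ≤ dist (φ x τx) (φ x₀ τx) + dist (φ x₀ τx) (φ x₀ τ) := dist_triangle _ _ _
    _ < ε' / 2 + ε' / 2 := add_lt_add hd1' hd2
    _ = ε' := by ring
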